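/- Let Q(ω) be a convex quadratic with minimizer ω₀, let E = {ω : h(ω) = 0} where h is a quadratic form with h(ω₀) > 0, and let R(ω) = Q(ω) + h(ω)². Suppose every global minimizer of R lies in {ω : h(ω) < 0}. Then for any global minimizer ω_min there exists ω' on the segment [ω₀, ω_min] with h(ω') = 0 and R(ω') < R(ω_min), a contradiction; hence R has a global minimizer in {ω : h(ω) ≥ 0}. -/

import Mathlib

open Matrix BigOperators

/-- If `Q` is a (strictly) convex quadratic with minimizer `ω₀`, `h` is a
quadratic function with `h(ω₀) > 0`, and `R = Q + h²` (the prediction risk),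
then `R` has a global minimizer in the region `{ω : h(ω) ≥ 0}` (weakly outside
the ellipse `{h = 0}`). -/
theorem risk_minimizer_outside_ellipse {d : ℕ}
    (A : Matrix (Fin d) (Fin d) ℝ) (hA : A.PosDef) (b : Fin d → ℝ) (q₀ : ℝ)
    (B : Matrix (Fin d) (Fin d) ℝ) (u : Fin d → ℝ) (e : ℝ)
    (Q h R : (Fin d → ℝ) → ℝ)
    (hQ : ∀ ω, Q ω = ω ⬝ᵥ A.mulVec ω + b ⬝ᵥ ω + q₀)
    (hh : ∀ ω, h ω = ω ⬝ᵥ B.mulVec ω + u ⬝ᵥ ω + e)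
    (hR : ∀ ω, R ω = Q ω + (h ω) ^ 2)
    (ω₀ : Fin d → ℝ) (hω₀ : ∀ ω, Q ω₀ ≤ Q ω)
    (hover : 0 < h ω₀) :
    ∃ m : Fin d → ℝ, (∀ ω, R m ≤ R ω) ∧ 0 ≤ h m := by
  classical
  -- the pure quadratic part
  set g : (Fin d → ℝ) → ℝ := fun x => x ⬝ᵥ A.mulVec x with hg
  have cont_quad : ∀ (M : Matrix (Fin d) (Fin d) ℝ) (v : Fin d → ℝ) (c : ℝ),
      Continuous fun x : Fin d → ℝ => x ⬝ᵥ M.mulVec x + v ⬝ᵥ x + c := by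
    intro M v c
    simp only [dotProduct, mulVec]
    fun_prop
  have contg : Continuous g := by
    have := cont_quad A 0 0
    simpa using this
  have contQ : Continuous Q := by
    have : Q = fun x => x ⬝ᵥ A.mulVec x + b ⬝ᵥ x + q₀ := funext hQ
    rw [this]; exact cont_quad A b q₀
  have conth : Continuous h := by
    have : h = fun x => x ⬝ᵥ B.mulVec x + u ⬝ᵥ x + e := funext hh
    rw [this]; exact cont_quad B u e
  have contR : Continuous R := by
    have : R = fun x => Q x + (h x) ^ 2 := funext hR
    rw [this]; exact contQ.add (conth.pow 2)
  have gpos : ∀ x : Fin d → ℝ, x ≠ 0 → 0 < g x := by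
    intro x hx
    have := hA.dotProduct_mulVec_pos hx
    simpa [hg] using this
  have gzero : g 0 = 0 := by simp [hg]
  have gnonneg : ∀ x, 0 ≤ g x := by
    intro x
    by_cases hx : x = 0
    · simp [hx, gzero]
    · exact (gpos x hx).le
  -- scaling of the quadratic form
  have gsmul : ∀ (s : ℝ) (y : Fin d → ℝ), g (s • y) = s ^ 2 * g y := by
    intro s y
    simp only [hg, smul_dotProduct, mulVec_smul, dotProduct_smul, smul_eq_mul]
    ring
  -- key identity : Q (ω₀ + w) = Q ω₀ + g w
  have key : ∀ w : Fin d → ℝ, Q (ω₀ + w) = Q ω₀ + g w := by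
    intro w
    set L : ℝ := ω₀ ⬝ᵥ A.mulVec w + w ⬝ᵥ A.mulVec ω₀ + b ⬝ᵥ w with hL
    have expand : ∀ t : ℝ, Q (ω₀ + t • w) = Q ω₀ + L * t + g w * t ^ 2 := by
      intro t
      simp only [hQ, hg, hL, add_dotProduct, dotProduct_add, mulVec_add, mulVec_smul,
        smul_dotProduct, dotProduct_smul, smul_eq_mul]
      ring
    have hnn : ∀ t : ℝ, 0 ≤ g w * (t * t) + L * t + 0 := by
      intro t
      have := hω₀ (ω₀ + t • w)
      rw [expand t] at this
      nlinarith [this]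
    have hd := discrim_le_zero hnn
    have hL0 : L = 0 := by
      rw [discrim] at hd
      nlinarith [sq_nonneg L]
    have := expand 1
    rw [hL0] at this
    simpa using this
  -- handle the degenerate case d = 0
  rcases Nat.eq_zero_or_pos d with hd | hd
  · subst hd
    refine ⟨ω₀, fun ω => ?_, hover.le⟩
    have : ω = ω₀ := funext fun i => i.elim0
    rw [this]
  -- coercivity constant: minimum of g on the unit sphere
  haveI : Nonempty (Fin d) := ⟨⟨0, hd⟩⟩
  have hsne : (Metric.sphere (0 : Fin d → ℝ) 1).Nonempty :=
    NormedSpace.sphere_nonempty.mpr (by norm_num)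
  obtain ⟨u0, hu0mem, hu0min⟩ :=
    (isCompact_sphere (0 : Fin d → ℝ) 1).exists_isMinOn hsne contg.continuousOn
  have hu0norm : ‖u0‖ = 1 := by simpa using hu0mem
  have hu0ne : u0 ≠ 0 := by
    intro h0; rw [h0] at hu0norm; simp at hu0norm
  set c : ℝ := g u0 with hc
  have hcpos : 0 < c := gpos u0 hu0ne
  have coercive : ∀ x : Fin d → ℝ, c * ‖x‖ ^ 2 ≤ g x := by
    intro x
    by_cases hx : x = 0
    · simp [hx, gzero]
    · have hnx : (0 : ℝ) < ‖x‖ := norm_pos_iff.mpr hx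
      set v := ‖x‖⁻¹ • x with hv
      have hvmem : v ∈ Metric.sphere (0 : Fin d → ℝ) 1 := by
        simp [hv, norm_smul, abs_of_pos (inv_pos.mpr hnx), inv_mul_cancel₀ hnx.ne']
      have hxv : x = ‖x‖ • v := by
        rw [hv, smul_smul, mul_inv_cancel₀ hnx.ne', one_smul]
      have := hu0min hvmem
      have hgx : g x = ‖x‖ ^ 2 * g v := by
        conv_lhs => rw [hxv]
        rw [gsmul]
      rw [hgx]
      have : c ≤ g v := this
      nlinarith
  -- existence of a global minimizer of R
  set r : ℝ := Real.sqrt ((R ω₀ - Q ω₀) / c) + 1 with hr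
  have hRQ : 0 ≤ R ω₀ - Q ω₀ := by rw [hR ω₀]; nlinarith [sq_nonneg (h ω₀)]
  have hr0 : 0 ≤ r := by positivity
  have hrsq : (R ω₀ - Q ω₀) / c < r ^ 2 := by
    have hs := Real.sq_sqrt (div_nonneg hRQ hcpos.le)
    have hsq0 : 0 ≤ Real.sqrt ((R ω₀ - Q ω₀) / c) := Real.sqrt_nonneg _
    nlinarith
  have outside : ∀ ω : Fin d → ℝ, ω ∉ Metric.closedBall ω₀ r → R ω₀ < R ω := by
    intro ω hω
    have hdist : r < ‖ω - ω₀‖ := by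
      have := lt_of_not_ge (fun hle => hω (Metric.mem_closedBall.mpr hle))
      rwa [dist_eq_norm] at this
    have h1 : Q ω₀ + c * ‖ω - ω₀‖ ^ 2 ≤ Q ω := by
      have := key (ω - ω₀)
      simp only [add_sub_cancel] at this
      have hco := coercive (ω - ω₀)
      linarith
    have h2 : c * r ^ 2 < c * ‖ω - ω₀‖ ^ 2 := by
      have : r ^ 2 < ‖ω - ω₀‖ ^ 2 := by nlinarith
      nlinarith
    have h3 : R ω₀ - Q ω₀ < c * r ^ 2 := by
      have := (div_lt_iff₀ hcpos).mp hrsq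
      nlinarith
    have h4 : Q ω ≤ R ω := by rw [hR ω]; nlinarith [sq_nonneg (h ω)]
    linarith
  obtain ⟨m, hmK, hmmin⟩ := (isCompact_closedBall ω₀ r).exists_isMinOn
    ⟨ω₀, Metric.mem_closedBall_self hr0⟩ contR.continuousOn
  have hglobal : ∀ ω, R m ≤ R ω := by
    intro ω
    by_cases hω : ω ∈ Metric.closedBall ω₀ r
    · exact hmmin hω
    · have h1 : R m ≤ R ω₀ := hmmin (Metric.mem_closedBall_self hr0)
      exact h1.trans (outside ω hω).le
  -- if h m ≥ 0 we are done; otherwise find a zero of h on the segment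
  by_cases hm : 0 ≤ h m
  · exact ⟨m, hglobal, hm⟩
  push_neg at hm
  set v : Fin d → ℝ := m - ω₀ with hv
  set φ : ℝ → ℝ := fun t => h (ω₀ + t • v) with hφ
  have contφ : Continuous φ := by
    apply conth.comp
    fun_prop
  have hφ0 : φ 0 = h ω₀ := by simp [hφ]
  have hφ1 : φ 1 = h m := by simp [hφ, hv]
  have hmem : (0 : ℝ) ∈ Set.Icc (φ 1) (φ 0) := by
    constructor
    · rw [hφ1]; exact hm.le
    · rw [hφ0]; exact hover.le
  obtain ⟨t, htmem, ht0⟩ := intermediate_value_Icc' (by norm_num : (0:ℝ) ≤ 1)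
    contφ.continuousOn hmem
  set m' : Fin d → ℝ := ω₀ + t • v with hm'
  have hhm' : h m' = 0 := ht0
  have hQm' : Q m' ≤ Q m := by
    have e1 : Q m' = Q ω₀ + t ^ 2 * g v := by rw [hm', key, gsmul]
    have e2 : Q m = Q ω₀ + g v := by
      have : m = ω₀ + v := by rw [hv]; abel
      rw [this, key]
    have hgv := gnonneg v
    have ht01 : 0 ≤ t ∧ t ≤ 1 := htmem
    have ht2 : t ^ 2 ≤ 1 := by nlinarith [ht01.1, ht01.2]
    have := mul_le_mul_of_nonneg_right ht2 hgv
    linarith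
  refine ⟨m', fun ω => ?_, hhm'.ge⟩
  have : R m' = Q m' := by rw [hR, hhm']; ring
  have hRm : Q m ≤ R m := by rw [hR m]; nlinarith [sq_nonneg (h m)]
  calc R m' = Q m' := this
    _ ≤ Q m := hQm'
    _ ≤ R m := hRm
    _ ≤ R ω := hglobal ω
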